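/- Let p ≥ 1, let k_j > 0 be a real number, let Γ be a symmetric positive definite real p×p matrix, and let B be a symmetric real p×p matrix. Define Y* := k_j · Γ^{1/2} (I − Γ^{−1/2} B Γ^{−1/2})₊ Γ^{1/2}. Then Y* ⪰ O, B + Y*/k_j ≻ O, the matrix G := −Γ^{−1} + (B + Y*/k_j)^{−1} satisfies G ⪯ O, and trace(G · Y*) = 0. -/

import Mathlib

/-- The positive part `X₊` of a symmetric (Hermitian) real matrix `X`: with spectral
decomposition `X = U diag(λ₁,…,λ_p) Uᵀ`, it is `U diag(max(λ₁,0),…,max(λ_p,0)) Uᵀ`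
(junk value `0` if `X` is not Hermitian). -/
noncomputable def matPosPart {p : ℕ} (X : Matrix (Fin p) (Fin p) ℝ) :
    Matrix (Fin p) (Fin p) ℝ :=
  if hX : X.IsHermitian then
    (hX.eigenvectorUnitary : Matrix (Fin p) (Fin p) ℝ) *
      Matrix.diagonal (fun i => max (hX.eigenvalues i) 0) *
      (star hX.eigenvectorUnitary : Matrix (Fin p) (Fin p) ℝ)
  else 0

/-- The square root of a positive semidefinite matrix, as `Matrix.PosSemidef.sqrt` was defined
in Mathlib of December 2024 (removed since). -/
noncomputable def Matrix.PosSemidef.sqrt {n 𝕜 : Type*} [Fintype n] [DecidableEq n] [RCLike 𝕜]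
    [PartialOrder 𝕜] [StarOrderedRing 𝕜]
    {A : Matrix n n 𝕜} (hA : A.PosSemidef) : Matrix n n 𝕜 :=
  hA.1.eigenvectorUnitary.1 * Matrix.diagonal ((↑) ∘ (√·) ∘ hA.1.eigenvalues) *
    (star hA.1.eigenvectorUnitary : Matrix n n 𝕜)


open Matrix

/-- conjugation of a diagonal matrix by a fixed matrix -/
noncomputable def conjDiag {p : ℕ} (U : Matrix (Fin p) (Fin p) ℝ) (d : Fin p → ℝ) :
    Matrix (Fin p) (Fin p) ℝ :=
  U * Matrix.diagonal d * star U

namespace conjDiag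

variable {p : ℕ} {U : Matrix (Fin p) (Fin p) ℝ}

lemma mul (h : star U * U = 1) (d e : Fin p → ℝ) :
    conjDiag U d * conjDiag U e = conjDiag U (fun i => d i * e i) := by
  unfold conjDiag
  simp only [Matrix.mul_assoc]
  rw [← Matrix.mul_assoc (star U) U, h, one_mul,
    ← Matrix.mul_assoc (Matrix.diagonal d) (Matrix.diagonal e), diagonal_mul_diagonal]

lemma add (d e : Fin p → ℝ) :
    conjDiag U d + conjDiag U e = conjDiag U (fun i => d i + e i) := by
  unfold conjDiag
  rw [← add_mul, ← mul_add, diagonal_add]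

lemma sub (d e : Fin p → ℝ) :
    conjDiag U d - conjDiag U e = conjDiag U (fun i => d i - e i) := by
  unfold conjDiag
  rw [← sub_mul, ← mul_sub, diagonal_sub]

lemma one (h : U * star U = 1) : conjDiag U (fun _ => 1) = 1 := by
  unfold conjDiag
  rw [diagonal_one, mul_one, h]

lemma zero : conjDiag U (fun _ => 0) = 0 := by
  unfold conjDiag
  rw [diagonal_zero, mul_zero, zero_mul]

lemma inv (h1 : U * star U = 1) (h2 : star U * U = 1) (d : Fin p → ℝ) (hd : ∀ i, d i ≠ 0) :
    (conjDiag U d)⁻¹ = conjDiag U (fun i => (d i)⁻¹) := by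
  apply Matrix.inv_eq_right_inv
  rw [mul h2, show (fun i => d i * (d i)⁻¹) = fun _ => (1:ℝ) from
    funext fun i => mul_inv_cancel₀ (hd i), one h1]

lemma psd (d : Fin p → ℝ) (hd : ∀ i, 0 ≤ d i) : (conjDiag U d).PosSemidef := by
  have := (Matrix.posSemidef_diagonal_iff.mpr hd).mul_mul_conjTranspose_same U
  simpa [conjDiag, Matrix.star_eq_conjTranspose] using this

lemma posdef (h1 : U * star U = 1) (h2 : star U * U = 1) (d : Fin p → ℝ) (hd : ∀ i, 0 < d i) :
    (conjDiag U d).PosDef := by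
  have hinj : Function.Injective (star U).mulVec :=
    Matrix.mulVec_injective_iff_isUnit.mpr (⟨⟨star U, U, h2, h1⟩, rfl⟩ : IsUnit (star U))
  have hD : (Matrix.diagonal d).PosDef := Matrix.PosDef.diagonal hd
  refine Matrix.posDef_iff_dotProduct_mulVec.mpr ⟨?_, fun x hx => ?_⟩
  · have := Matrix.isHermitian_mul_mul_conjTranspose U hD.1
    simpa [conjDiag, Matrix.star_eq_conjTranspose] using this
  · have hx' : (star U) *ᵥ x ≠ 0 := fun h0 => hx (hinj (by simpa using h0))
    have := hD.dotProduct_mulVec_pos hx'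
    simpa only [conjDiag, star_mulVec, dotProduct_mulVec, vecMul_vecMul,
      Matrix.star_eq_conjTranspose, Matrix.mul_assoc, conjTranspose_conjTranspose] using this

end conjDiag

lemma sqrt_aux {p : ℕ} {A : Matrix (Fin p) (Fin p) ℝ} (hA : A.PosSemidef) :
    hA.sqrt.PosSemidef ∧ hA.sqrt * hA.sqrt = A := by
  have e : hA.sqrt = conjDiag (hA.1.eigenvectorUnitary : Matrix (Fin p) (Fin p) ℝ)
      (fun i => √(hA.1.eigenvalues i)) := by
    simp [Matrix.PosSemidef.sqrt, conjDiag, Function.comp_def]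
  have hU2 : star (hA.1.eigenvectorUnitary : Matrix (Fin p) (Fin p) ℝ) *
      (hA.1.eigenvectorUnitary : Matrix (Fin p) (Fin p) ℝ) = 1 :=
    Matrix.mem_unitaryGroup_iff'.mp hA.1.eigenvectorUnitary.2
  rw [e]
  refine ⟨conjDiag.psd _ (fun i => Real.sqrt_nonneg _), ?_⟩
  rw [conjDiag.mul hU2, show (fun i => √(hA.1.eigenvalues i) * √(hA.1.eigenvalues i)) =
    hA.1.eigenvalues from funext fun i => Real.mul_self_sqrt (hA.eigenvalues_nonneg i)]
  have := hA.1.spectral_theorem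
  simpa [conjDiag, Function.comp] using this.symm

lemma psd_smul {p : ℕ} {M : Matrix (Fin p) (Fin p) ℝ} (hM : M.PosSemidef) {c : ℝ}
    (hc : 0 ≤ c) : (c • M).PosSemidef := by
  refine Matrix.posSemidef_iff_dotProduct_mulVec.mpr ⟨?_, fun x => ?_⟩
  · rw [Matrix.IsHermitian, Matrix.conjTranspose_smul, hM.1.eq]
    simp
  · rw [Matrix.smul_mulVec, dotProduct_smul, smul_eq_mul]
    exact mul_nonneg hc (hM.dotProduct_mulVec_nonneg x)

lemma psd_posDef_of_isUnit {p : ℕ} {M : Matrix (Fin p) (Fin p) ℝ}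
    (hM : M.PosSemidef) (hu : IsUnit M) : M.PosDef := by
  refine Matrix.posDef_iff_dotProduct_mulVec.mpr
    ⟨hM.1, fun x hx => lt_of_le_of_ne (hM.dotProduct_mulVec_nonneg x) fun h => hx ?_⟩
  have h0 : M *ᵥ x = 0 := (hM.dotProduct_mulVec_zero_iff x).mp h.symm
  have hinj := Matrix.mulVec_injective_iff_isUnit.mpr hu
  exact hinj (by simpa using h0)

lemma posDef_conj {p : ℕ} {C S : Matrix (Fin p) (Fin p) ℝ}
    (hC : C.PosDef) (hS : IsUnit S) (hSh : Sᴴ = S) : (S * C * S).PosDef := by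
  have hinj : Function.Injective S.mulVec := Matrix.mulVec_injective_iff_isUnit.mpr hS
  refine Matrix.posDef_iff_dotProduct_mulVec.mpr ⟨?_, fun x hx => ?_⟩
  · have := Matrix.isHermitian_conjTranspose_mul_mul S hC.1
    rwa [hSh] at this
  · have hx' : S *ᵥ x ≠ 0 := fun h0 => hx (hinj (by simpa using h0))
    have key := hC.dotProduct_mulVec_pos hx'
    simp only [star_mulVec, dotProduct_mulVec, vecMul_vecMul, mulVec_mulVec,
      Matrix.mul_assoc] at key ⊢
    rwa [hSh] at key

/-- With `Y* := kⱼ Γ^{1/2} (I − Γ^{−1/2} B Γ^{−1/2})₊ Γ^{1/2}`, we have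
`Y* ⪰ O`, `B + Y*/kⱼ ≻ O`, the gradient `G := −Γ⁻¹ + (B + Y*/kⱼ)⁻¹` satisfies `G ⪯ O`,
and `trace(G Y*) = 0`. -/
theorem stmt12 {p : ℕ} (hp : 1 ≤ p) (kj : ℝ) (hkj : 0 < kj)
    (Γ B : Matrix (Fin p) (Fin p) ℝ) (hΓs : Γ.IsSymm) (hΓ : Γ.PosDef) (hBs : B.IsSymm)
    (sqrtΓ : Matrix (Fin p) (Fin p) ℝ) (hsqrtΓ : sqrtΓ = hΓ.posSemidef.sqrt)
    (Ystar : Matrix (Fin p) (Fin p) ℝ)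
    (hYstar : Ystar = kj • (sqrtΓ * matPosPart (1 - sqrtΓ⁻¹ * B * sqrtΓ⁻¹) * sqrtΓ))
    (G : Matrix (Fin p) (Fin p) ℝ)
    (hG : G = -Γ⁻¹ + (B + kj⁻¹ • Ystar)⁻¹) :
    Ystar.PosSemidef ∧ (B + kj⁻¹ • Ystar).PosDef ∧
      (-G).PosSemidef ∧ (G * Ystar).trace = 0 := by
  have hSpsd : sqrtΓ.PosSemidef := by rw [hsqrtΓ]; exact (sqrt_aux hΓ.posSemidef).1
  have hSS : sqrtΓ * sqrtΓ = Γ := by rw [hsqrtΓ]; exact (sqrt_aux hΓ.posSemidef).2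
  have hdet : IsUnit sqrtΓ.det := by
    refine isUnit_iff_ne_zero.mpr fun h => hΓ.det_pos.ne' ?_
    rw [← hSS, Matrix.det_mul, h, mul_zero]
  have hSu : IsUnit sqrtΓ := (Matrix.isUnit_iff_isUnit_det _).mpr hdet
  have hS1 : sqrtΓ * sqrtΓ⁻¹ = 1 := Matrix.mul_nonsing_inv _ hdet
  have hS2 : sqrtΓ⁻¹ * sqrtΓ = 1 := Matrix.nonsing_inv_mul _ hdet
  have hSher : sqrtΓᴴ = sqrtΓ := hSpsd.1
  have hSinher : (sqrtΓ⁻¹)ᴴ = sqrtΓ⁻¹ := hSpsd.1.inv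
  have hBh : B.IsHermitian := by
    rw [Matrix.IsHermitian, conjTranspose_eq_transpose_of_trivial]; exact hBs
  have hA : (1 - sqrtΓ⁻¹ * B * sqrtΓ⁻¹).IsHermitian := by
    have h1 : ((sqrtΓ⁻¹)ᴴ * B * sqrtΓ⁻¹).IsHermitian :=
      Matrix.isHermitian_conjTranspose_mul_mul _ hBh
    rw [hSinher] at h1
    exact Matrix.isHermitian_one.sub h1
  set U : Matrix (Fin p) (Fin p) ℝ := (hA.eigenvectorUnitary : Matrix (Fin p) (Fin p) ℝ)
    with hUdef
  set ev : Fin p → ℝ := hA.eigenvalues with hevdef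
  have hU1 : U * star U = 1 := Matrix.mem_unitaryGroup_iff.mp hA.eigenvectorUnitary.2
  have hU2 : star U * U = 1 := Matrix.mem_unitaryGroup_iff'.mp hA.eigenvectorUnitary.2
  -- spectral theorem
  have hMA : (1 : Matrix (Fin p) (Fin p) ℝ) - sqrtΓ⁻¹ * B * sqrtΓ⁻¹ = conjDiag U ev := by
    have := hA.spectral_theorem
    simpa [conjDiag, Function.comp] using this
  have hMP : matPosPart (1 - sqrtΓ⁻¹ * B * sqrtΓ⁻¹) = conjDiag U (fun i => max (ev i) 0) := by
    rw [matPosPart, dif_pos hA]; rfl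
  -- B as conjugation
  have hBeq : sqrtΓ⁻¹ * B * sqrtΓ⁻¹ = conjDiag U (fun i => 1 - ev i) := by
    have h1 : sqrtΓ⁻¹ * B * sqrtΓ⁻¹ = 1 - (1 - sqrtΓ⁻¹ * B * sqrtΓ⁻¹) :=
      (sub_sub_cancel 1 _).symm
    rw [h1, hMA, ← conjDiag.one hU1, conjDiag.sub]
  have hBconj : sqrtΓ * (sqrtΓ⁻¹ * B * sqrtΓ⁻¹) * sqrtΓ = B := by
    calc sqrtΓ * (sqrtΓ⁻¹ * B * sqrtΓ⁻¹) * sqrtΓ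
        = (sqrtΓ * sqrtΓ⁻¹) * B * (sqrtΓ⁻¹ * sqrtΓ) := by
          simp only [Matrix.mul_assoc]
      _ = B := by rw [hS1, hS2, one_mul, mul_one]
  set g : Fin p → ℝ := fun i => (1 - ev i) + max (ev i) 0 with hgdef
  have hg1 : ∀ i, 1 ≤ g i := by
    intro i
    rcases le_total (ev i) 0 with h | h
    · rw [hgdef]; simp only [max_eq_right h]; linarith
    · rw [hgdef]; simp only [max_eq_left h]; linarith
  have hgpos : ∀ i, 0 < g i := fun i => lt_of_lt_of_le one_pos (hg1 i)
  have hgne : ∀ i, g i ≠ 0 := fun i => (hgpos i).ne'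
  -- the key identity
  have hkk : kj⁻¹ • Ystar = sqrtΓ * conjDiag U (fun i => max (ev i) 0) * sqrtΓ := by
    rw [hYstar, smul_smul, inv_mul_cancel₀ hkj.ne', one_smul, hMP]
  have hC : B + kj⁻¹ • Ystar = sqrtΓ * conjDiag U g * sqrtΓ := by
    rw [hkk]
    conv_lhs => rw [← hBconj, hBeq]
    rw [← Matrix.add_mul, ← Matrix.mul_add, conjDiag.add]
  -- part 1
  have hYpsd : Ystar.PosSemidef := by
    rw [hYstar, hMP]
    have hpsd : (conjDiag U fun i => max (ev i) 0).PosSemidef :=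
      conjDiag.psd _ (fun i => le_max_right _ _)
    have h2 : (sqrtΓ * (conjDiag U fun i => max (ev i) 0) * sqrtΓᴴ).PosSemidef :=
      hpsd.mul_mul_conjTranspose_same sqrtΓ
    rw [hSher] at h2
    exact psd_smul h2 hkj.le
  -- part 2
  have hCpd : (B + kj⁻¹ • Ystar).PosDef := by
    rw [hC]
    exact posDef_conj (conjDiag.posdef hU1 hU2 g hgpos) hSu hSher
  -- inverse computations
  have hCinv : (B + kj⁻¹ • Ystar)⁻¹ = sqrtΓ⁻¹ * conjDiag U (fun i => (g i)⁻¹) * sqrtΓ⁻¹ := by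
    rw [hC, Matrix.mul_inv_rev, Matrix.mul_inv_rev, conjDiag.inv hU1 hU2 g hgne,
      Matrix.mul_assoc]
  have hΓinv : Γ⁻¹ = sqrtΓ⁻¹ * conjDiag U (fun _ => 1) * sqrtΓ⁻¹ := by
    rw [conjDiag.one hU1, mul_one, ← hSS, Matrix.mul_inv_rev]
  have hGeq : -G = sqrtΓ⁻¹ * conjDiag U (fun i => 1 - (g i)⁻¹) * sqrtΓ⁻¹ := by
    have h0 : -G = Γ⁻¹ - (B + kj⁻¹ • Ystar)⁻¹ := by rw [hG]; abel
    rw [h0, hCinv, hΓinv, ← Matrix.sub_mul, ← Matrix.mul_sub, conjDiag.sub]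
  -- part 3
  have hnGpsd : (-G).PosSemidef := by
    rw [hGeq]
    have hpsd : (conjDiag U fun i => 1 - (g i)⁻¹).PosSemidef := by
      refine conjDiag.psd _ fun i => ?_
      have := inv_le_one_of_one_le₀ (hg1 i)
      linarith
    have h2 := hpsd.mul_mul_conjTranspose_same sqrtΓ⁻¹
    rwa [hSinher] at h2
  -- part 4
  have hGY : G * Ystar = 0 := by
    have hGexp : G = sqrtΓ⁻¹ * conjDiag U (fun i => (g i)⁻¹ - 1) * sqrtΓ⁻¹ := by
      have h0 : G = (B + kj⁻¹ • Ystar)⁻¹ - Γ⁻¹ := by rw [hG]; abel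
      rw [h0, hCinv, hΓinv, ← Matrix.sub_mul, ← Matrix.mul_sub, conjDiag.sub]
    have hzero : (fun i => ((g i)⁻¹ - 1) * max (ev i) 0) = fun _ => (0:ℝ) := by
      funext i
      rcases le_total (ev i) 0 with h | h
      · rw [max_eq_right h, mul_zero]
      · have hgi : g i = 1 := by rw [hgdef]; simp only [max_eq_left h]; ring
        rw [hgi]; simp
    rw [hGexp, hYstar, hMP, mul_smul_comm]
    have hmid : sqrtΓ⁻¹ * conjDiag U (fun i => (g i)⁻¹ - 1) * sqrtΓ⁻¹ *
        (sqrtΓ * conjDiag U (fun i => max (ev i) 0) * sqrtΓ) =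
        sqrtΓ⁻¹ * (conjDiag U (fun i => (g i)⁻¹ - 1) *
          conjDiag U (fun i => max (ev i) 0)) * sqrtΓ := by
      simp only [Matrix.mul_assoc]
      rw [← Matrix.mul_assoc sqrtΓ⁻¹ sqrtΓ, hS2, one_mul]
    rw [hmid, conjDiag.mul hU2, hzero, conjDiag.zero, Matrix.mul_zero, Matrix.zero_mul,
      smul_zero]
  exact ⟨hYpsd, hCpd, hnGpsd, by rw [hGY, Matrix.trace_zero]⟩
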